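/- Let n ≥ 1 be an integer, let 0 < ε < (2n)!, and let w₀ : ℝ → ℝ be (2n+1)-times continuously differentiable with sup_{x∈ℝ} |w₀^{(k)}(x) − w̄₀^{(k)}(x)| < ε for every k = 0, 1, …, 2n+1, where w̄₀(x) := −x + x^{2n+1}/(2n+1). Then there exists exactly one point x̊ ∈ ℝ with w₀^{(2n)}(x̊) = 0, and it satisfies |x̊| ≤ ε/((2n)! − ε). -/

import Mathlib

lemma ideriv_mul_pow (a : ℝ) (p : ℕ) : ∀ k, iteratedDeriv k (fun x : ℝ => a * x ^ p)
    = fun x => a * (p.descFactorial k : ℝ) * x ^ (p - k) := by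
  intro k
  induction k with
  | zero => simp
  | succ k ih =>
    rw [iteratedDeriv_succ, ih]
    funext x
    rw [deriv_const_mul _ (differentiable_pow _ |>.differentiableAt), deriv_pow_field]
    rw [Nat.descFactorial_succ]
    push_cast
    rcases Nat.eq_zero_or_pos (p - k) with h | h
    · simp [h, Nat.sub_eq_zero_of_le (by omega : p ≤ k + 1)]
    · have : p - (k+1) = p - k - 1 := by omega
      rw [this]; ring

lemma ideriv_f (p : ℕ) (c : ℝ) (k : ℕ) :
    iteratedDeriv (k+2) (fun x : ℝ => -x + x ^ (p+2) / c)
      = fun x => (((p:ℝ)+2)*((p:ℝ)+1)/c) * (p.descFactorial k : ℝ) * x ^ (p - k) := by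
  have h1 : deriv (fun x : ℝ => -x + x ^ (p+2) / c)
      = fun x => -1 + ((p:ℝ)+2) * x ^ (p+1) / c := by
    funext x
    have : HasDerivAt (fun x : ℝ => -x + x ^ (p+2) / c)
        (-1 + ((p+2 : ℕ) : ℝ) * x ^ (p+2-1) / c) x :=
      (hasDerivAt_id x).neg.add ((hasDerivAt_pow (p+2) x).div_const c)
    simpa using this.deriv
  have h2 : deriv (fun x : ℝ => -1 + ((p:ℝ)+2) * x ^ (p+1) / c)
      = fun x => (((p:ℝ)+2)*((p:ℝ)+1)/c) * x ^ p := by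
    funext x
    have : HasDerivAt (fun x : ℝ => -1 + ((p:ℝ)+2) * x ^ (p+1) / c)
        ((((p:ℝ)+2) * (((p+1 : ℕ) : ℝ) * x ^ (p+1-1))) / c) x :=
      ((((hasDerivAt_pow (p+1) x).const_mul (((p:ℝ)+2))).div_const c).const_add (-1))
    rw [this.deriv]
    push_cast
    ring
  rw [show k + 2 = (k+1)+1 from rfl, iteratedDeriv_succ', h1, iteratedDeriv_succ', h2,
    ideriv_mul_pow]

theorem statement7 (n : ℕ) (hn : 1 ≤ n) (ε : ℝ)
    (hε0 : 0 < ε) (hε1 : ε < (Nat.factorial (2 * n) : ℝ))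
    (w₀ : ℝ → ℝ) (hw : ContDiff ℝ (2 * n + 1) w₀)
    (hclose : ∀ k ≤ 2 * n + 1, ∀ x : ℝ,
      |iteratedDeriv k w₀ x -
        iteratedDeriv k (fun x : ℝ => -x + x ^ (2 * n + 1) / (2 * (n : ℝ) + 1)) x| < ε) :
    ∃ x₀ : ℝ, iteratedDeriv (2 * n) w₀ x₀ = 0 ∧
      |x₀| ≤ ε / ((Nat.factorial (2 * n) : ℝ) - ε) ∧
      ∀ x : ℝ, iteratedDeriv (2 * n) w₀ x = 0 → x = x₀ := by
  obtain ⟨j, rfl⟩ : ∃ j, n = j + 1 := ⟨n - 1, by omega⟩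
  set K : ℝ := (Nat.factorial (2 * (j+1)) : ℝ) with hKdef
  have hK0 : 0 < K := by positivity
  have hc : (2 * (((j+1) : ℕ) : ℝ) + 1) = ((2*j:ℕ):ℝ) + 3 := by push_cast; ring
  have hfun : (fun x : ℝ => -x + x ^ (2 * (j+1) + 1) / (2 * (((j+1):ℕ) : ℝ) + 1))
      = fun x : ℝ => -x + x ^ ((2*j+1)+2) / (((2*j:ℕ):ℝ) + 3) := by
    funext x
    rw [hc, show 2 * (j+1) + 1 = (2*j+1)+2 by ring]
  have hdf : ((2*j+1).descFactorial (2*j) : ℝ) = ((2*j+1).factorial : ℝ) := by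
    have h := Nat.descFactorial_self (2*j+1)
    rw [show 2*j+1 = (2*j)+1 from rfl, Nat.descFactorial_succ] at h
    simp at h
    exact_mod_cast h
  have hfact : K = (2*(j:ℝ)+2) * ((2*j+1).factorial : ℝ) := by
    rw [hKdef, show 2*(j+1) = (2*j+1)+1 by ring, Nat.factorial_succ]
    push_cast; ring
  have key1 : iteratedDeriv (2 * (j+1))
      (fun x : ℝ => -x + x ^ (2 * (j+1) + 1) / (2 * (((j+1):ℕ) : ℝ) + 1))
      = fun x => K * x := by
    rw [hfun, show 2*(j+1) = (2*j)+2 by ring, ideriv_f]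
    funext x
    rw [show (2*j+1) - 2*j = 1 by omega]
    have h1 : ((2*j+1:ℕ):ℝ) + 2 = (2*j:ℝ) + 3 := by push_cast; ring
    push_cast [hdf, hfact]
    have h3 : (2*(j:ℝ)+3) ≠ 0 := by positivity
    field_simp
    ring
  have key2 : iteratedDeriv (2 * (j+1) + 1)
      (fun x : ℝ => -x + x ^ (2 * (j+1) + 1) / (2 * (((j+1):ℕ) : ℝ) + 1))
      = fun _ => K := by
    rw [hfun, show 2*(j+1)+1 = (2*j+1)+2 by ring, ideriv_f]
    funext x
    rw [Nat.sub_self, Nat.descFactorial_self]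
    push_cast [hfact]
    have h3 : (2*(j:ℝ)+3) ≠ 0 := by positivity
    field_simp
    ring
  set g : ℝ → ℝ := iteratedDeriv (2 * (j+1)) w₀ with hg
  have hgd : Differentiable ℝ g := by
    apply hw.differentiable_iteratedDeriv
    exact_mod_cast lt_add_one (2*(j+1))
  have pos : ∀ x, 0 < deriv g x := by
    intro x
    have h := hclose (2*(j+1)+1) le_rfl x
    rw [key2] at h
    rw [abs_sub_lt_iff] at h
    rw [hg, ← iteratedDeriv_succ]
    linarith [h.2]
  have mono : StrictMono g := strictMono_of_deriv_pos pos
  set M : ℝ := ε / (K - ε) with hM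
  have hKε : 0 < K - ε := by linarith
  have hM0 : 0 < M := div_pos hε0 hKε
  have hKM : ε < K * M := by
    rw [hM, ← mul_div_assoc, lt_div_iff₀ hKε]
    nlinarith
  have hgM : 0 < g M := by
    have h := hclose (2*(j+1)) (by omega) M
    rw [key1, abs_sub_lt_iff] at h
    have h' : K * M - iteratedDeriv (2*(j+1)) w₀ M < ε := h.2
    show 0 < iteratedDeriv (2*(j+1)) w₀ M
    linarith
  have hgm : g (-M) < 0 := by
    have h := hclose (2*(j+1)) (by omega) (-M)
    rw [key1, abs_sub_lt_iff] at h
    have h' : iteratedDeriv (2*(j+1)) w₀ (-M) - K * (-M) < ε := h.1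
    show iteratedDeriv (2*(j+1)) w₀ (-M) < 0
    linarith
  have hsub := intermediate_value_Icc (by linarith : -M ≤ M) hgd.continuous.continuousOn
  obtain ⟨x₀, hx₀mem, hx₀⟩ := hsub ⟨hgm.le, hgM.le⟩
  exact ⟨x₀, hx₀, abs_le.mpr ⟨hx₀mem.1, hx₀mem.2⟩,
    fun x hx => mono.injective (hx.trans hx₀.symm)⟩
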